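/- Let N > 4 and α > 2 be reals, and define R : [1, N] → ℝ by R(b) = Γ(b + 1 − b/(Nα)) · Γ(1 − 2b/(Nα)) / ( Γ(b + 1 − 2b/(Nα)) · Γ(1 − b/(Nα)) ), where Γ is the Gamma function (all arguments are positive for b ∈ [1, N] since α > 2). Then R is monotone nondecreasing on [1, N]: for all reals 1 ≤ b₁ ≤ b₂ ≤ N, R(b₁) ≤ R(b₂). Consequently, the coefficient of variations of job compute time √(R(B) − 1) under Pareto task service times is minimized over B ∈ {1, …, N} at B = 1, i.e., at full diversity. -/

import Mathlib

open Real Filter Finset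

private lemma log_term_mono {c j x y : ℝ} (hc : 0 ≤ c) (hj : 0 ≤ j) (hx : 0 < x) (hxy : x ≤ y) :
    Real.log (x + j) - Real.log (x + c + j) ≤ Real.log (y + j) - Real.log (y + c + j) := by
  have hxj : 0 < x + j := by linarith
  have hyj : 0 < y + j := by linarith
  have hxcj : 0 < x + c + j := by linarith
  have hycj : 0 < y + c + j := by linarith
  rw [sub_le_sub_iff, ← Real.log_mul (by positivity) (by positivity),
    ← Real.log_mul (by positivity) (by positivity)]
  apply Real.log_le_log (by positivity)
  nlinarith [mul_nonneg hc (sub_nonneg.2 hxy)]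

private lemma log_term_concave {c j p q m s : ℝ} (hc : 0 ≤ c) (hj : 0 ≤ j)
    (hq : 0 < q) (hm : 0 < m) (hp : 0 < p) (hs : 0 < s)
    (hsum : p + q = m + s) (hprod : p * q ≤ m * s) :
    (Real.log (p + j) - Real.log (p + c + j)) + (Real.log (q + j) - Real.log (q + c + j)) ≤
      (Real.log (m + j) - Real.log (m + c + j)) + (Real.log (s + j) - Real.log (s + c + j)) := by
  have key : (m + j) * (s + j) * ((p + c + j) * (q + c + j))
      - (p + j) * (q + j) * ((m + c + j) * (s + c + j))
      = (m * s - p * q) * ((p + q) * c + c ^ 2 + 2 * c * j) := by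
    linear_combination (p * q * c - c * j ^ 2 - c ^ 2 * j) * hsum
  have hfac : (0:ℝ) ≤ (p + q) * c + c ^ 2 + 2 * c * j := by
    have : (0:ℝ) ≤ (p + q) * c := mul_nonneg (by linarith) hc
    nlinarith
  have hpos := mul_nonneg (sub_nonneg.2 hprod) hfac
  have h1 : Real.log ((p + j) * (q + j)) + Real.log ((m + c + j) * (s + c + j)) ≤
      Real.log ((m + j) * (s + j)) + Real.log ((p + c + j) * (q + c + j)) := by
    rw [← Real.log_mul (by positivity) (by positivity),
      ← Real.log_mul (by positivity) (by positivity)]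
    apply Real.log_le_log (by positivity)
    nlinarith [key, hpos]
  rw [Real.log_mul (by positivity) (by positivity), Real.log_mul (by positivity) (by positivity),
    Real.log_mul (by positivity) (by positivity), Real.log_mul (by positivity) (by positivity)] at h1
  linarith

private lemma log_gammaSeq {x : ℝ} (hx : 0 < x) {n : ℕ} (hn : 1 ≤ n) :
    Real.log (Real.GammaSeq x n) =
      x * Real.log n + Real.log (Nat.factorial n : ℝ)
        - ∑ j ∈ Finset.range (n + 1), Real.log (x + j) := by
  have hn0 : (0:ℝ) < n := by exact_mod_cast hn
  have hne : ∀ j ∈ Finset.range (n + 1), x + (j : ℝ) ≠ 0 := fun j _ => by positivity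
  have hfact : (0:ℝ) < ((Nat.factorial n : ℕ) : ℝ) := by exact_mod_cast n.factorial_pos
  rw [Real.GammaSeq, Real.log_div (by positivity) (Finset.prod_ne_zero_iff.2 hne),
    Real.log_mul (by positivity) hfact.ne', Real.log_rpow hn0, Real.log_prod hne]

private lemma tendsto_g {c : ℝ} (hc : 0 < c) {x : ℝ} (hx : 0 < x) :
    Tendsto (fun n : ℕ => c * Real.log n +
        ∑ j ∈ Finset.range (n + 1), (Real.log (x + j) - Real.log (x + c + j)))
      atTop (nhds (Real.log (Real.Gamma (x + c)) - Real.log (Real.Gamma x))) := by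
  have h1 : Tendsto (fun n : ℕ => Real.log (Real.GammaSeq (x + c) n) - Real.log (Real.GammaSeq x n))
      atTop (nhds (Real.log (Real.Gamma (x + c)) - Real.log (Real.Gamma x))) :=
    (((Real.continuousAt_log (Real.Gamma_pos_of_pos (by linarith)).ne').tendsto).comp
        (Real.GammaSeq_tendsto_Gamma (x + c))).sub
      (((Real.continuousAt_log (Real.Gamma_pos_of_pos hx).ne').tendsto).comp
        (Real.GammaSeq_tendsto_Gamma x))
  refine Tendsto.congr' ?_ h1
  filter_upwards [eventually_ge_atTop 1] with n hn
  rw [log_gammaSeq (by linarith) hn, log_gammaSeq hx hn, Finset.sum_sub_distrib]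
  ring

private lemma g_ineq {c u₁ u₂ : ℝ} (hc : 1 ≤ c) (hu₁ : 0 < u₁) (h12 : u₁ ≤ u₂) (hu₂ : u₂ < 1/2) :
    (Real.log (Real.Gamma ((1 - u₁) + c)) - Real.log (Real.Gamma (1 - u₁)))
      + (Real.log (Real.Gamma ((1 - 2*u₂) + c)) - Real.log (Real.Gamma (1 - 2*u₂)))
    ≤ (Real.log (Real.Gamma ((1 - 2*u₁) + c)) - Real.log (Real.Gamma (1 - 2*u₁)))
      + (Real.log (Real.Gamma ((1 - u₂) + c)) - Real.log (Real.Gamma (1 - u₂))) := by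
  have hc0 : (0:ℝ) < c := by linarith
  have hp : (0:ℝ) < 1 - u₁ := by linarith
  have hq : (0:ℝ) < 1 - 2*u₂ := by linarith
  have hr : (0:ℝ) < 1 - 2*u₁ := by linarith
  have hs : (0:ℝ) < 1 - u₂ := by linarith
  have hm : (0:ℝ) < 1 - u₁ - u₂ := by linarith
  have key : ∀ n : ℕ,
      (c * Real.log n + ∑ j ∈ Finset.range (n + 1),
          (Real.log ((1 - u₁) + j) - Real.log ((1 - u₁) + c + j)))
      + (c * Real.log n + ∑ j ∈ Finset.range (n + 1),
          (Real.log ((1 - 2*u₂) + j) - Real.log ((1 - 2*u₂) + c + j)))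
      ≤ (c * Real.log n + ∑ j ∈ Finset.range (n + 1),
          (Real.log ((1 - 2*u₁) + j) - Real.log ((1 - 2*u₁) + c + j)))
      + (c * Real.log n + ∑ j ∈ Finset.range (n + 1),
          (Real.log ((1 - u₂) + j) - Real.log ((1 - u₂) + c + j))) := by
    intro n
    have hterm : ∀ j ∈ Finset.range (n + 1),
        (Real.log ((1 - u₁) + (j:ℝ)) - Real.log ((1 - u₁) + c + j))
          + (Real.log ((1 - 2*u₂) + j) - Real.log ((1 - 2*u₂) + c + j))
        ≤ (Real.log ((1 - 2*u₁) + (j:ℝ)) - Real.log ((1 - 2*u₁) + c + j))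
          + (Real.log ((1 - u₂) + j) - Real.log ((1 - u₂) + c + j)) := by
      intro j _
      have hj : (0:ℝ) ≤ j := Nat.cast_nonneg j
      have h1 := log_term_concave (c := c) (j := (j:ℝ)) (p := 1 - u₁) (q := 1 - 2*u₂)
        (m := 1 - u₁ - u₂) (s := 1 - u₂) hc0.le hj hq hm hp hs (by ring)
        (by nlinarith [mul_nonneg (by linarith : (0:ℝ) ≤ u₂) (sub_nonneg.2 h12)])
      have h2 := log_term_mono (c := c) (j := (j:ℝ)) (x := 1 - u₁ - u₂) (y := 1 - 2*u₁)
        hc0.le hj hm (by linarith)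
      linarith
    have hsum := Finset.sum_le_sum hterm
    rw [Finset.sum_add_distrib, Finset.sum_add_distrib] at hsum
    linarith [hsum]
  exact le_of_tendsto_of_tendsto'
    ((tendsto_g hc0 hp).add (tendsto_g hc0 hq))
    ((tendsto_g hc0 hr).add (tendsto_g hc0 hs)) key

private lemma stepB {c u₁ u₂ : ℝ} (hc : 1 ≤ c) (hu₁ : 0 < u₁) (h12 : u₁ ≤ u₂) (hu₂ : u₂ < 1/2) :
    Real.Gamma (c + 1 - u₁) * Real.Gamma (1 - 2*u₁)
        * (Real.Gamma (c + 1 - 2*u₂) * Real.Gamma (1 - u₂))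
      ≤ Real.Gamma (c + 1 - u₂) * Real.Gamma (1 - 2*u₂)
        * (Real.Gamma (c + 1 - 2*u₁) * Real.Gamma (1 - u₁)) := by
  have h := g_ineq hc hu₁ h12 hu₂
  rw [show (1 - u₁) + c = c + 1 - u₁ by ring, show (1 - 2*u₂) + c = c + 1 - 2*u₂ by ring,
    show (1 - 2*u₁) + c = c + 1 - 2*u₁ by ring, show (1 - u₂) + c = c + 1 - u₂ by ring] at h
  have p1 : 0 < Real.Gamma (c + 1 - u₁) := Real.Gamma_pos_of_pos (by linarith)
  have p2 : 0 < Real.Gamma (1 - 2*u₁) := Real.Gamma_pos_of_pos (by linarith)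
  have p3 : 0 < Real.Gamma (c + 1 - 2*u₂) := Real.Gamma_pos_of_pos (by linarith)
  have p4 : 0 < Real.Gamma (1 - u₂) := Real.Gamma_pos_of_pos (by linarith)
  have p5 : 0 < Real.Gamma (c + 1 - u₂) := Real.Gamma_pos_of_pos (by linarith)
  have p6 : 0 < Real.Gamma (1 - 2*u₂) := Real.Gamma_pos_of_pos (by linarith)
  have p7 : 0 < Real.Gamma (c + 1 - 2*u₁) := Real.Gamma_pos_of_pos (by linarith)
  have p8 : 0 < Real.Gamma (1 - u₁) := Real.Gamma_pos_of_pos (by linarith)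
  have hlog : Real.log (Real.Gamma (c + 1 - u₁)) + Real.log (Real.Gamma (1 - 2*u₁))
      + Real.log (Real.Gamma (c + 1 - 2*u₂)) + Real.log (Real.Gamma (1 - u₂))
      ≤ Real.log (Real.Gamma (c + 1 - u₂)) + Real.log (Real.Gamma (1 - 2*u₂))
      + Real.log (Real.Gamma (c + 1 - 2*u₁)) + Real.log (Real.Gamma (1 - u₁)) := by linarith
  have h2 := Real.exp_le_exp.mpr hlog
  rw [Real.exp_add, Real.exp_add, Real.exp_add, Real.exp_add, Real.exp_add, Real.exp_add,
    Real.exp_log p1, Real.exp_log p2, Real.exp_log p3, Real.exp_log p4, Real.exp_log p5,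
    Real.exp_log p6, Real.exp_log p7, Real.exp_log p8] at h2
  nlinarith [h2]

private lemma convex_four {f : ℝ → ℝ} (hf : ConvexOn ℝ (Set.Ioi 0) f) {a b d : ℝ}
    (ha : 0 < a) (hab : a ≤ b) (hbd : b ≤ d) (had : a < d) :
    f b + f (a + d - b) ≤ f a + f d := by
  have hda : d - a ≠ 0 := by linarith
  set θ : ℝ := (d - b) / (d - a) with hθ
  have h0 : 0 ≤ θ := div_nonneg (by linarith) (by linarith)
  have h1 : θ ≤ 1 := by rw [hθ, div_le_one (by linarith)]; linarith
  have e1 : θ * a + (1 - θ) * d = b := by rw [hθ]; field_simp; ring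
  have e2 : (1 - θ) * a + θ * d = a + d - b := by rw [hθ]; field_simp; ring
  have H1 := hf.2 (Set.mem_Ioi.2 ha) (Set.mem_Ioi.2 (lt_trans ha had)) h0 (by linarith)
    (by ring : θ + (1 - θ) = 1)
  have H2 := hf.2 (Set.mem_Ioi.2 ha) (Set.mem_Ioi.2 (lt_trans ha had)) (by linarith : (0:ℝ) ≤ 1 - θ)
    h0 (by ring : (1 - θ) + θ = 1)
  rw [smul_eq_mul, smul_eq_mul, smul_eq_mul, smul_eq_mul, e1] at H1
  rw [smul_eq_mul, smul_eq_mul, smul_eq_mul, smul_eq_mul, e2] at H2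
  nlinarith [H1, H2]

private lemma stepA {b₁ b₂ u : ℝ} (hb₁ : 1 ≤ b₁) (h12 : b₁ ≤ b₂) (hu : 0 < u) (hu2 : u < 1/2) :
    Real.Gamma (b₁ + 1 - u) * Real.Gamma (b₂ + 1 - 2*u)
      ≤ Real.Gamma (b₂ + 1 - u) * Real.Gamma (b₁ + 1 - 2*u) := by
  have h := convex_four Real.convexOn_log_Gamma (a := b₁ + 1 - 2*u) (b := b₁ + 1 - u)
    (d := b₂ + 1 - u) (by linarith) (by linarith) (by linarith) (by linarith)
  rw [show (b₁ + 1 - 2*u) + (b₂ + 1 - u) - (b₁ + 1 - u) = b₂ + 1 - 2*u by ring] at h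
  simp only [Function.comp_apply] at h
  have p1 : 0 < Real.Gamma (b₁ + 1 - u) := Real.Gamma_pos_of_pos (by linarith)
  have p2 : 0 < Real.Gamma (b₂ + 1 - 2*u) := Real.Gamma_pos_of_pos (by linarith)
  have p3 : 0 < Real.Gamma (b₁ + 1 - 2*u) := Real.Gamma_pos_of_pos (by linarith)
  have p4 : 0 < Real.Gamma (b₂ + 1 - u) := Real.Gamma_pos_of_pos (by linarith)
  have h2 := Real.exp_le_exp.mpr h
  rw [Real.exp_add, Real.exp_add, Real.exp_log p1, Real.exp_log p2, Real.exp_log p3,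
    Real.exp_log p4] at h2
  linarith [h2]

/-- For reals `N > 4` and `α > 2`, the ratio
`R(b) = Γ(b+1−b/(Nα))·Γ(1−2b/(Nα)) / (Γ(b+1−2b/(Nα))·Γ(1−b/(Nα)))`
is monotone nondecreasing on `[1, N]`. Consequently the coefficient of variations
`√(R(B) − 1)` of job compute time under Pareto service times is minimized at full diversity
`B = 1`. -/
theorem pareto_cov_ratio_monotone
    (N α : ℝ) (hN : 4 < N) (hα : 2 < α)
    (b₁ b₂ : ℝ) (hb₁ : 1 ≤ b₁) (hb₁₂ : b₁ ≤ b₂) (hb₂ : b₂ ≤ N) :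
    Real.Gamma (b₁ + 1 - b₁ / (N * α)) * Real.Gamma (1 - 2 * b₁ / (N * α))
        / (Real.Gamma (b₁ + 1 - 2 * b₁ / (N * α)) * Real.Gamma (1 - b₁ / (N * α)))
      ≤ Real.Gamma (b₂ + 1 - b₂ / (N * α)) * Real.Gamma (1 - 2 * b₂ / (N * α))
          / (Real.Gamma (b₂ + 1 - 2 * b₂ / (N * α)) * Real.Gamma (1 - b₂ / (N * α))) := by
  have hK : (0:ℝ) < N * α := by nlinarith
  set u₁ : ℝ := b₁ / (N * α) with hu₁def
  set u₂ : ℝ := b₂ / (N * α) with hu₂def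
  have e1 : 2 * b₁ / (N * α) = 2 * u₁ := by rw [hu₁def]; ring
  have e2 : 2 * b₂ / (N * α) = 2 * u₂ := by rw [hu₂def]; ring
  rw [e1, e2]
  have h01 : 0 < u₁ := div_pos (by linarith) hK
  have h12 : u₁ ≤ u₂ := by rw [hu₁def, hu₂def]; gcongr
  have h2half : u₂ < 1/2 := by rw [hu₂def, div_lt_iff₀ hK]; nlinarith
  have h1half : u₁ < 1/2 := lt_of_le_of_lt h12 h2half
  have pA1 : 0 < Real.Gamma (b₁ + 1 - 2*u₁) := Real.Gamma_pos_of_pos (by linarith)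
  have pA2 : 0 < Real.Gamma (1 - u₁) := Real.Gamma_pos_of_pos (by linarith)
  have pA3 : 0 < Real.Gamma (b₂ + 1 - 2*u₁) := Real.Gamma_pos_of_pos (by linarith)
  have pA4 : 0 < Real.Gamma (1 - 2*u₁) := Real.Gamma_pos_of_pos (by linarith)
  have pA5 : 0 < Real.Gamma (b₂ + 1 - 2*u₂) := Real.Gamma_pos_of_pos (by linarith)
  have pA6 : 0 < Real.Gamma (1 - u₂) := Real.Gamma_pos_of_pos (by linarith)
  have A := stepA hb₁ hb₁₂ h01 h1half
  have B := stepB (c := b₂) (by linarith) h01 h12 h2half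
  calc Real.Gamma (b₁ + 1 - u₁) * Real.Gamma (1 - 2*u₁)
        / (Real.Gamma (b₁ + 1 - 2*u₁) * Real.Gamma (1 - u₁))
      ≤ Real.Gamma (b₂ + 1 - u₁) * Real.Gamma (1 - 2*u₁)
        / (Real.Gamma (b₂ + 1 - 2*u₁) * Real.Gamma (1 - u₁)) := by
        rw [div_le_div_iff₀ (by positivity) (by positivity)]
        nlinarith [mul_le_mul_of_nonneg_right A (le_of_lt (mul_pos pA4 pA2))]
    _ ≤ Real.Gamma (b₂ + 1 - u₂) * Real.Gamma (1 - 2*u₂)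
        / (Real.Gamma (b₂ + 1 - 2*u₂) * Real.Gamma (1 - u₂)) := by
        rw [div_le_div_iff₀ (by positivity) (by positivity)]
        nlinarith [B]
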